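/- For a weak composition a of length n, there is a unique lock Kohnert tableau T_a of content a whose weight equals flat(a), the composition obtained from a by removing zero parts and left-justifying to the bottom rows. -/

import Mathlib

open scoped Classical

/-- A Kohnert move: take the rightmost cell of row `r` and move it down in its
column to the highest open row `r'` below (rows indexed from 1). Cells are `(row, column)`. -/
def KohnertMove (D D' : Finset (ℕ × ℕ)) : Prop :=
  ∃ r c r', (r, c) ∈ D ∧ (∀ c', (r, c') ∈ D → c' ≤ c) ∧
    1 ≤ r' ∧ r' < r ∧ (r', c) ∉ D ∧ (∀ r'', r' < r'' → r'' < r → (r'', c) ∈ D) ∧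
    D' = insert (r', c) (D.erase (r, c))

/-- The largest part of a weak composition. -/
def maxPart (a : List ℕ) : ℕ := a.foldr max 0

/-- Number of cells of a diagram in row `i`. -/
def rowWeight (D : Finset (ℕ × ℕ)) (i : ℕ) : ℕ :=
  (D.filter (fun p => p.1 = i)).card

/-- The weight of a diagram, as a finitely supported function recording the
number of cells in each row. -/
noncomputable def wtF (D : Finset (ℕ × ℕ)) : ℕ →₀ ℕ := ∑ p ∈ D, Finsupp.single p.1 1

/-- The exponent vector `x^a` of a weak composition `a` (1-based variables). -/
noncomputable def compFinsupp (a : List ℕ) : ℕ →₀ ℕ :=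
  ∑ i ∈ Finset.range a.length, Finsupp.single (i + 1) (a.getD i 0)

/-- A labeled diagram is a finite set of triples `(row, column, label)`. The
underlying diagram forgets the labels. -/
def Tcells (T : Finset (ℕ × ℕ × ℕ)) : Finset (ℕ × ℕ) := T.image (fun t => (t.1, t.2.1))

/-- The weight of a labeled diagram records the number of cells in each row. -/
noncomputable def wtT (T : Finset (ℕ × ℕ × ℕ)) : ℕ →₀ ℕ := ∑ t ∈ T, Finsupp.single t.1 1

/-- Lock Kohnert tableau of content `a`: one label per cell; exactly one `i` in
each column from `max(a) - a_i + 1` through `max(a)`; entries in row `r` are at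
least `r` (and labels lie in `1..n`); cells with a fixed label weakly descend
from left to right; labels strictly decrease down columns. -/
def IsLKTF (a : List ℕ) (T : Finset (ℕ × ℕ × ℕ)) : Prop :=
  (∀ t ∈ T, ∀ t' ∈ T, t.1 = t'.1 → t.2.1 = t'.2.1 → t = t') ∧
  (∀ i ∈ Finset.Icc 1 a.length, ∀ c : ℕ,
      (T.filter (fun t => t.2.1 = c ∧ t.2.2 = i)).card =
        if maxPart a - a.getD (i - 1) 0 < c ∧ c ≤ maxPart a then 1 else 0) ∧
  (∀ t ∈ T, 1 ≤ t.1 ∧ t.1 ≤ t.2.2 ∧ 1 ≤ t.2.2 ∧ t.2.2 ≤ a.length) ∧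
  (∀ t ∈ T, ∀ t' ∈ T, t.2.2 = t'.2.2 → t.2.1 < t'.2.1 → t'.1 ≤ t.1) ∧
  (∀ t ∈ T, ∀ t' ∈ T, t.2.1 = t'.2.1 → t.1 < t'.1 → t.2.2 < t'.2.2)

/-- `flat(a)`: the nonzero parts of `a`, in order. -/
def flatC (a : List ℕ) : List ℕ := a.filter (fun x => x ≠ 0)


/-- rank: number of nonzero entries among (1-based) positions 1..j -/
def rkF (a : List ℕ) (j : ℕ) : ℕ :=
  ((Finset.Icc 1 j).filter (fun p => a.getD (p-1) 0 ≠ 0)).card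

lemma getD_concat (l : List ℕ) (x : ℕ) (p : ℕ) :
    (l ++ [x]).getD p 0 = if p = l.length then x else l.getD p 0 := by
  rcases lt_trichotomy p l.length with h | h | h
  · rw [List.getD_append _ _ _ _ h, if_neg h.ne]
  · subst h
    simp [List.getD, List.getElem?_append_right (le_refl _)]
  · rw [if_neg h.ne', List.getD_eq_default _ _ (by simpa using h),
      List.getD_eq_default _ _ h.le]

lemma le_maxPart {a : List ℕ} {x : ℕ} (hx : x ∈ a) : x ≤ maxPart a := by
  induction a with
  | nil => simp at hx
  | cons y l ih =>
    have hm : maxPart (y :: l) = max y (maxPart l) := rfl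
    rw [List.mem_cons] at hx
    rcases hx with h | h
    · subst h; rw [hm]; exact le_max_left _ _
    · exact le_trans (ih h) (hm ▸ le_max_right _ _)

lemma getD_le_maxPart (a : List ℕ) (i : ℕ) : a.getD i 0 ≤ maxPart a := by
  by_cases h : i < a.length
  · exact le_maxPart (by rw [List.getD_eq_getElem _ _ h]; exact List.getElem_mem h)
  · rw [List.getD_eq_default _ _ (not_lt.mp h)]; exact Nat.zero_le _

-- rk basic properties
lemma rkF_mono (a : List ℕ) {j j' : ℕ} (h : j ≤ j') : rkF a j ≤ rkF a j' :=
  Finset.card_le_card (Finset.filter_subset_filter _ (Finset.Icc_subset_Icc_right h))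

lemma rkF_le (a : List ℕ) (j : ℕ) : rkF a j ≤ j := by
  calc rkF a j ≤ (Finset.Icc 1 j).card := Finset.card_le_card (Finset.filter_subset _ _)
  _ = j := by simp

lemma rkF_pos (a : List ℕ) {j : ℕ} (h1 : 1 ≤ j) (h2 : a.getD (j-1) 0 ≠ 0) :
    1 ≤ rkF a j := by
  have : j ∈ (Finset.Icc 1 j).filter (fun p => a.getD (p-1) 0 ≠ 0) := by
    simp only [Finset.mem_filter, Finset.mem_Icc]
    exact ⟨⟨h1, le_refl _⟩, h2⟩
  exact Finset.card_pos.mpr ⟨j, this⟩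

lemma rkF_strict (a : List ℕ) {j j' : ℕ} (h : j < j') (h2 : a.getD (j'-1) 0 ≠ 0) :
    rkF a j < rkF a j' := by
  apply Finset.card_lt_card
  constructor
  · exact Finset.filter_subset_filter _ (Finset.Icc_subset_Icc_right h.le)
  · intro hsub
    have : j' ∈ (Finset.Icc 1 j).filter (fun p => a.getD (p-1) 0 ≠ 0) := by
      apply hsub
      simp only [Finset.mem_filter, Finset.mem_Icc]
      exact ⟨⟨by omega, le_refl _⟩, h2⟩
    simp only [Finset.mem_filter, Finset.mem_Icc] at this
    omega

lemma rkF_stable (a : List ℕ) {j : ℕ} (h : a.length ≤ j) : rkF a j = rkF a a.length := by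
  unfold rkF
  congr 1
  ext p
  simp only [Finset.mem_filter, Finset.mem_Icc]
  constructor
  · rintro ⟨⟨h1, h2⟩, h3⟩
    refine ⟨⟨h1, ?_⟩, h3⟩
    by_contra hc
    exact h3 (List.getD_eq_default _ _ (by omega))
  · rintro ⟨⟨h1, h2⟩, h3⟩; exact ⟨⟨h1, by omega⟩, h3⟩

lemma rkF_concat (l : List ℕ) (x : ℕ) (j : ℕ) :
    rkF (l ++ [x]) j = rkF l j + if l.length + 1 ≤ j ∧ x ≠ 0 then 1 else 0 := by
  unfold rkF
  by_cases hx : x = 0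
  · subst hx
    rw [if_neg (by simp), add_zero]
    congr 1
    apply Finset.filter_congr
    intro p _
    rw [getD_concat]
    split
    · next h => rw [List.getD_eq_default l 0 h.ge]
    · rfl
  · by_cases hj : l.length + 1 ≤ j
    · rw [if_pos ⟨hj, hx⟩]
      have hkey : (Finset.Icc 1 j).filter (fun p => (l ++ [x]).getD (p-1) 0 ≠ 0)
          = insert (l.length + 1) ((Finset.Icc 1 j).filter (fun p => l.getD (p-1) 0 ≠ 0)) := by
        ext p
        simp only [Finset.mem_filter, Finset.mem_insert, Finset.mem_Icc]
        rw [getD_concat]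
        constructor
        · rintro ⟨⟨h1, h2⟩, h3⟩
          by_cases hp : p - 1 = l.length
          · left; omega
          · right; rw [if_neg hp] at h3; exact ⟨⟨h1, h2⟩, h3⟩
        · rintro (h | ⟨⟨h1, h2⟩, h3⟩)
          · subst h; simp only [Nat.add_sub_cancel, if_pos rfl]
            exact ⟨⟨by omega, hj⟩, hx⟩
          · refine ⟨⟨h1, h2⟩, ?_⟩
            have hp : p - 1 ≠ l.length := by
              intro hc
              exact h3 (List.getD_eq_default _ _ (le_of_eq hc.symm))
            rw [if_neg hp]; exact h3
      rw [hkey, Finset.card_insert_of_notMem]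
      simp only [Finset.mem_filter, not_and]
      intro _
      simp [List.getD_eq_default l 0 (le_refl l.length)]
    · rw [if_neg (by tauto), add_zero]
      congr 1
      apply Finset.filter_congr
      intro p hp
      simp only [Finset.mem_Icc] at hp
      rw [getD_concat, if_neg (by omega)]

lemma flatC_concat (l : List ℕ) (x : ℕ) :
    flatC (l ++ [x]) = flatC l ++ if x = 0 then [] else [x] := by
  unfold flatC
  rw [List.filter_append]
  congr 1
  by_cases hx : x = 0 <;> simp [hx]

lemma compFinsupp_concat (l : List ℕ) (x : ℕ) :
    compFinsupp (l ++ [x]) = compFinsupp l + Finsupp.single (l.length + 1) x := by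
  unfold compFinsupp
  rw [List.length_append, List.length_singleton, Finset.sum_range_succ]
  congr 1
  · apply Finset.sum_congr rfl
    intro i hi
    simp only [Finset.mem_range] at hi
    rw [List.getD_append _ _ _ _ hi]
  · rw [getD_concat, if_pos rfl]

lemma flatC_length (l : List ℕ) : (flatC l).length = rkF l l.length := by
  induction l using List.reverseRecOn with
  | nil => simp [flatC, rkF]
  | append_singleton l x ih =>
    rw [flatC_concat, List.length_append, ih, List.length_append, List.length_singleton,
      rkF_concat, rkF_stable l (Nat.le_succ _)]
    by_cases hx : x = 0 <;> simp [hx]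

lemma master (a : List ℕ) :
    compFinsupp (flatC a) = ∑ i ∈ Finset.Icc 1 a.length,
      Finsupp.single (rkF a i) (a.getD (i-1) 0) := by
  induction a using List.reverseRecOn with
  | nil => simp [flatC, compFinsupp]
  | append_singleton l x ih =>
    rw [flatC_concat, List.length_append, List.length_singleton,
      Finset.sum_Icc_succ_top (by omega)]
    have hterms : ∀ i ∈ Finset.Icc 1 l.length,
        Finsupp.single (rkF (l ++ [x]) i) ((l ++ [x]).getD (i-1) 0)
          = Finsupp.single (rkF l i) (l.getD (i-1) 0) := by
      intro i hi
      simp only [Finset.mem_Icc] at hi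
      rw [rkF_concat, if_neg (by omega), add_zero, getD_concat, if_neg (by omega)]
    rw [Finset.sum_congr rfl hterms, ← ih, rkF_concat, getD_concat]
    by_cases hx : x = 0
    · subst hx
      simp
    · have h1 : (if x = 0 then ([]:List ℕ) else [x]) = [x] := if_neg hx
      have h2 : (if l.length + 1 ≤ l.length + 1 ∧ x ≠ 0 then 1 else 0) = 1 :=
        if_pos ⟨le_refl _, hx⟩
      have h3 : (if l.length + 1 - 1 = l.length then x else l.getD (l.length + 1 - 1) 0) = x :=
        if_pos rfl
      rw [h1, h2, h3, compFinsupp_concat, flatC_length, rkF_stable l (Nat.le_succ _)]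

/-- The canonical lock tableau. -/
noncomputable def T0 (a : List ℕ) : Finset (ℕ × ℕ × ℕ) :=
  (((Finset.Icc 1 a.length) ×ˢ (Finset.Icc 1 (maxPart a))).filter
    (fun p => maxPart a - a.getD (p.1 - 1) 0 < p.2)).image (fun p => (rkF a p.1, p.2, p.1))

lemma T0_mem (a : List ℕ) (t : ℕ × ℕ × ℕ) :
    t ∈ T0 a ↔ 1 ≤ t.2.2 ∧ t.2.2 ≤ a.length ∧ t.2.1 ≤ maxPart a ∧
      maxPart a - a.getD (t.2.2 - 1) 0 < t.2.1 ∧ t.1 = rkF a t.2.2 := by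
  unfold T0
  simp only [Finset.mem_image, Finset.mem_filter, Finset.mem_product, Finset.mem_Icc]
  constructor
  · rintro ⟨p, ⟨⟨⟨h1, h2⟩, h3, h4⟩, h5⟩, rfl⟩
    exact ⟨h1, h2, h4, h5, rfl⟩
  · rintro ⟨h1, h2, h3, h4, h5⟩
    refine ⟨(t.2.2, t.2.1), ⟨⟨⟨h1, h2⟩, ?_, h3⟩, h4⟩, ?_⟩
    · omega
    · exact Prod.ext h5.symm rfl

lemma T0_label_ne (a : List ℕ) {t : ℕ × ℕ × ℕ} (ht : t ∈ T0 a) :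
    a.getD (t.2.2 - 1) 0 ≠ 0 := by
  rw [T0_mem] at ht
  intro hc
  rw [hc] at ht
  omega

lemma Ioc_filter_eq (m v : ℕ) (hv : v ≤ m) :
    (Finset.Icc 1 m).filter (fun c => m - v < c) = Finset.Ioc (m - v) m := by
  ext c
  simp only [Finset.mem_filter, Finset.mem_Icc, Finset.mem_Ioc]
  omega

lemma T0_isLKTF (a : List ℕ) : IsLKTF a (T0 a) := by
  refine ⟨?_, ?_, ?_, ?_, ?_⟩
  · -- injectivity
    intro t ht t' ht' hr hc
    have h1 := T0_label_ne a ht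
    have h2 := T0_label_ne a ht'
    rw [T0_mem] at ht ht'
    have hlab : t.2.2 = t'.2.2 := by
      by_contra hne
      rcases lt_or_gt_of_ne hne with h | h
      · have := rkF_strict a h h2; omega
      · have := rkF_strict a h h1; omega
    have : t.2 = t'.2 := Prod.ext hc hlab
    exact Prod.ext hr this
  · -- column counts
    intro i hi c
    simp only [Finset.mem_Icc] at hi
    by_cases hcond : maxPart a - a.getD (i - 1) 0 < c ∧ c ≤ maxPart a
    · rw [if_pos hcond]
      rw [Finset.card_eq_one]
      refine ⟨(rkF a i, c, i), ?_⟩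
      ext t
      simp only [Finset.mem_filter, Finset.mem_singleton]
      constructor
      · rintro ⟨ht, hc1, hc2⟩
        rw [T0_mem] at ht
        have : t = (rkF a t.2.2, t.2.1, t.2.2) := Prod.ext ht.2.2.2.2 rfl
        rw [this, hc1, hc2]
      · rintro rfl
        refine ⟨?_, rfl, rfl⟩
        rw [T0_mem]
        exact ⟨hi.1, hi.2, hcond.2, hcond.1, rfl⟩
    · rw [if_neg hcond, Finset.card_eq_zero]
      rw [Finset.filter_eq_empty_iff]
      rintro t ht ⟨hc1, hc2⟩
      rw [T0_mem] at ht
      rw [hc1, hc2] at ht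
      exact hcond ⟨ht.2.2.2.1, ht.2.2.1⟩
  · -- bounds
    intro t ht
    have h0 := T0_label_ne a ht
    rw [T0_mem] at ht
    refine ⟨?_, ?_, ht.1, ht.2.1⟩
    · rw [ht.2.2.2.2]; exact rkF_pos a ht.1 h0
    · rw [ht.2.2.2.2]; exact rkF_le a t.2.2
  · -- weak descent: same label same row
    intro t ht t' ht' hlab _
    rw [T0_mem] at ht ht'
    rw [ht.2.2.2.2, ht'.2.2.2.2, hlab]
  · -- strict columns
    intro t ht t' ht' _ hrow
    rw [T0_mem] at ht ht'
    rw [ht.2.2.2.2, ht'.2.2.2.2] at hrow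
    by_contra hc
    push_neg at hc
    exact absurd (rkF_mono a hc) (by omega)

lemma T0_wt (a : List ℕ) : wtT (T0 a) = compFinsupp (flatC a) := by
  rw [master]
  unfold wtT T0
  rw [Finset.sum_image]
  · rw [Finset.sum_filter]
    rw [Finset.sum_product]
    apply Finset.sum_congr rfl
    intro i hi
    simp only [Finset.mem_Icc] at hi
    have hv : a.getD (i-1) 0 ≤ maxPart a := getD_le_maxPart a (i-1)
    rw [← Finset.sum_filter, Ioc_filter_eq _ _ hv]
    have hconst : ∀ c ∈ Finset.Ioc (maxPart a - a.getD (i-1) 0) (maxPart a),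
        (Finsupp.single (rkF a (i, c).1, (i, c).2, (i, c).1).1 (1:ℕ))
          = Finsupp.single (rkF a i) 1 := fun c _ => rfl
    rw [Finset.sum_congr rfl hconst, Finset.sum_const, Nat.card_Ioc]
    have : maxPart a - (maxPart a - a.getD (i-1) 0) = a.getD (i-1) 0 := by omega
    rw [this]
    ext r
    simp [Finsupp.single_apply]
  · intro p hp q hq hpq
    simp only [Prod.mk.injEq] at hpq
    exact Prod.ext hpq.2.2 hpq.2.1

lemma wtT_apply (T : Finset (ℕ × ℕ × ℕ)) (r : ℕ) :
    wtT T r = (T.filter (fun t => t.1 = r)).card := by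
  unfold wtT
  rw [Finset.sum_apply', Finset.card_filter]
  apply Finset.sum_congr rfl
  intro t _
  rw [Finsupp.single_apply]

lemma compFinsupp_apply_gt (l : List ℕ) {r : ℕ} (h : l.length < r) : compFinsupp l r = 0 := by
  unfold compFinsupp
  rw [Finset.sum_apply']
  apply Finset.sum_eq_zero
  intro i hi
  simp only [Finset.mem_range] at hi
  rw [Finsupp.single_apply, if_neg (by omega)]

lemma lkt_unique (a : List ℕ) (T : Finset (ℕ × ℕ × ℕ)) (hLK : IsLKTF a T)
    (hw : wtT T = compFinsupp (flatC a)) : T = T0 a := by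
  obtain ⟨h1, h2, h3, h4, h5⟩ := hLK
  -- structural facts about each cell
  have hstruct : ∀ t ∈ T, a.getD (t.2.2 - 1) 0 ≠ 0 ∧
      maxPart a - a.getD (t.2.2 - 1) 0 < t.2.1 ∧ t.2.1 ≤ maxPart a := by
    intro t ht
    have hb := h3 t ht
    have hcard := h2 t.2.2 (Finset.mem_Icc.mpr ⟨hb.2.2.1, hb.2.2.2⟩) t.2.1
    have hpos : 0 < (T.filter (fun u => u.2.1 = t.2.1 ∧ u.2.2 = t.2.2)).card :=
      Finset.card_pos.mpr ⟨t, by simp [ht]⟩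
    rw [hcard] at hpos
    split at hpos
    · next hcond =>
      refine ⟨?_, hcond.1, hcond.2⟩
      intro hc; rw [hc] at hcond; omega
    · omega
  -- rows are at most k = rkF a a.length
  have hrow_le_k : ∀ t ∈ T, t.1 ≤ rkF a a.length := by
    intro t ht
    by_contra hc
    push_neg at hc
    have h0 : (T.filter (fun u => u.1 = t.1)).card = 0 := by
      rw [← wtT_apply, hw]
      apply compFinsupp_apply_gt
      rw [flatC_length]; exact hc
    have hmem : t ∈ T.filter (fun u => u.1 = t.1) := by simp [ht]
    rw [Finset.card_eq_zero] at h0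
    rw [h0] at hmem; simp at hmem
  -- the cell in column m with label j
  have hcolm : ∀ j, 1 ≤ j → j ≤ a.length → a.getD (j-1) 0 ≠ 0 →
      (T.filter (fun u => u.2.1 = maxPart a ∧ u.2.2 = j)).card = 1 := by
    intro j hj1 hj2 hj3
    rw [h2 j (Finset.mem_Icc.mpr ⟨hj1, hj2⟩) (maxPart a), if_pos]
    have hv : a.getD (j-1) 0 ≤ maxPart a := getD_le_maxPart a (j-1)
    exact ⟨by omega, le_refl _⟩
  have hgex : ∀ j : ℕ, ∃ u : ℕ × ℕ × ℕ, (1 ≤ j ∧ j ≤ a.length ∧ a.getD (j-1) 0 ≠ 0) →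
      (u ∈ T ∧ u.2.1 = maxPart a ∧ u.2.2 = j) := by
    intro j
    by_cases hjc : 1 ≤ j ∧ j ≤ a.length ∧ a.getD (j-1) 0 ≠ 0
    · have hc1 := hcolm j hjc.1 hjc.2.1 hjc.2.2
      rw [Finset.card_eq_one] at hc1
      obtain ⟨u, hu⟩ := hc1
      have hum : u ∈ T.filter (fun u => u.2.1 = maxPart a ∧ u.2.2 = j) :=
        hu ▸ Finset.mem_singleton_self u
      rw [Finset.mem_filter] at hum
      exact ⟨u, fun _ => ⟨hum.1, hum.2⟩⟩
    · exact ⟨(0,0,0), fun h => absurd h hjc⟩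
  choose g hg using hgex
  -- strict monotonicity of rows of column-m cells
  have hmono : ∀ j j', (1 ≤ j ∧ j ≤ a.length ∧ a.getD (j-1) 0 ≠ 0) →
      (1 ≤ j' ∧ j' ≤ a.length ∧ a.getD (j'-1) 0 ≠ 0) → j < j' → (g j).1 < (g j').1 := by
    intro j j' hj hj' hlt
    obtain ⟨hT1, hc1, hl1⟩ := hg j hj
    obtain ⟨hT2, hc2, hl2⟩ := hg j' hj'
    have hne : (g j).1 ≠ (g j').1 := by
      intro he
      have := h1 _ hT1 _ hT2 he (hc1.trans hc2.symm)
      rw [this] at hl1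
      omega
    rcases lt_or_gt_of_ne hne with h | h
    · exact h
    · have := h5 _ hT2 _ hT1 (hc2.trans hc1.symm) h
      omega
  have hlow : ∀ j, (1 ≤ j ∧ j ≤ a.length ∧ a.getD (j-1) 0 ≠ 0) → rkF a j ≤ (g j).1 := by
    intro j hj
    have hle : ((Finset.Icc 1 j).filter (fun p => a.getD (p-1) 0 ≠ 0)).card ≤
        (Finset.Icc 1 ((g j).1)).card := by
      apply Finset.card_le_card_of_injOn (fun p => (g p).1)
      · intro p hp
        simp only [Finset.mem_coe, Finset.mem_filter, Finset.mem_Icc] at hp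
        have hpv : 1 ≤ p ∧ p ≤ a.length ∧ a.getD (p-1) 0 ≠ 0 :=
          ⟨hp.1.1, le_trans hp.1.2 hj.2.1, hp.2⟩
        obtain ⟨hT1, _, _⟩ := hg p hpv
        simp only [Finset.mem_coe, Finset.mem_Icc]
        refine ⟨(h3 _ hT1).1, ?_⟩
        rcases eq_or_lt_of_le hp.1.2 with he | hlt
        · rw [he]
        · exact (hmono p j hpv hj hlt).le
      · intro p hp q hq hpq
        have hpq2 : (g p).1 = (g q).1 := hpq
        simp only [Finset.coe_filter, Set.mem_setOf_eq, Finset.mem_Icc] at hp hq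
        by_contra hne
        have hpv : 1 ≤ p ∧ p ≤ a.length ∧ a.getD (p-1) 0 ≠ 0 :=
          ⟨hp.1.1, le_trans hp.1.2 hj.2.1, hp.2⟩
        have hqv : 1 ≤ q ∧ q ≤ a.length ∧ a.getD (q-1) 0 ≠ 0 :=
          ⟨hq.1.1, le_trans hq.1.2 hj.2.1, hq.2⟩
        rcases lt_or_gt_of_ne hne with h | h
        · have := hmono p q hpv hqv h; omega
        · have := hmono q p hqv hpv h; omega
    simpa [rkF, Nat.card_Icc] using hle
  have hsplit : ∀ j, j ≤ a.length → rkF a a.length = rkF a j +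
      ((Finset.Ioc j a.length).filter (fun p => a.getD (p-1) 0 ≠ 0)).card := by
    intro j hj
    have hd : Disjoint (Finset.Icc 1 j) (Finset.Ioc j a.length) := by
      rw [Finset.disjoint_left]
      intro p hp hq
      simp only [Finset.mem_Icc] at hp
      simp only [Finset.mem_Ioc] at hq
      omega
    have hu : Finset.Icc 1 j ∪ Finset.Ioc j a.length = Finset.Icc 1 a.length := by
      ext p
      simp only [Finset.mem_union, Finset.mem_Icc, Finset.mem_Ioc]
      omega
    calc rkF a a.length
        = (((Finset.Icc 1 j ∪ Finset.Ioc j a.length)).filter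
            (fun p => a.getD (p-1) 0 ≠ 0)).card := by rw [hu]; rfl
      _ = _ := by
          rw [Finset.filter_union,
            Finset.card_union_of_disjoint (Finset.disjoint_filter_filter hd)]
          rfl
  have hhigh : ∀ j, (1 ≤ j ∧ j ≤ a.length ∧ a.getD (j-1) 0 ≠ 0) → (g j).1 ≤ rkF a j := by
    intro j hj
    obtain ⟨hT1, hc1, hl1⟩ := hg j hj
    have hcardM : ((Finset.Ioc j a.length).filter (fun p => a.getD (p-1) 0 ≠ 0)).card ≤
        (Finset.Ioc ((g j).1) (rkF a a.length)).card := by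
      apply Finset.card_le_card_of_injOn (fun p => (g p).1)
      · intro p hp
        simp only [Finset.mem_coe, Finset.mem_filter, Finset.mem_Ioc] at hp
        have hpv : 1 ≤ p ∧ p ≤ a.length ∧ a.getD (p-1) 0 ≠ 0 :=
          ⟨by omega, hp.1.2, hp.2⟩
        obtain ⟨hT2, _, _⟩ := hg p hpv
        simp only [Finset.mem_coe, Finset.mem_Ioc]
        exact ⟨hmono j p hj hpv hp.1.1, hrow_le_k _ hT2⟩
      · intro p hp q hq hpq
        have hpq2 : (g p).1 = (g q).1 := hpq
        simp only [Finset.coe_filter, Set.mem_setOf_eq, Finset.mem_Ioc] at hp hq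
        by_contra hne
        have hpv : 1 ≤ p ∧ p ≤ a.length ∧ a.getD (p-1) 0 ≠ 0 := ⟨by omega, hp.1.2, hp.2⟩
        have hqv : 1 ≤ q ∧ q ≤ a.length ∧ a.getD (q-1) 0 ≠ 0 := ⟨by omega, hq.1.2, hq.2⟩
        rcases lt_or_gt_of_ne hne with h | h
        · have := hmono p q hpv hqv h; omega
        · have := hmono q p hqv hpv h; omega
    rw [Nat.card_Ioc] at hcardM
    have hgk : (g j).1 ≤ rkF a a.length := hrow_le_k _ hT1
    have hsp := hsplit j hj.2.1
    omega
  have hcolm_uniq : ∀ t ∈ T, t.2.1 = maxPart a → t = g t.2.2 := by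
    intro t ht hc
    have hb := h3 t ht
    have hs := hstruct t ht
    have hjv : 1 ≤ t.2.2 ∧ t.2.2 ≤ a.length ∧ a.getD (t.2.2 - 1) 0 ≠ 0 :=
      ⟨hb.2.2.1, hb.2.2.2, hs.1⟩
    obtain ⟨hT1, hc1, hl1⟩ := hg t.2.2 hjv
    have hcard := hcolm t.2.2 hjv.1 hjv.2.1 hjv.2.2
    rw [Finset.card_eq_one] at hcard
    obtain ⟨u, hu⟩ := hcard
    have h1' : t ∈ T.filter (fun u => u.2.1 = maxPart a ∧ u.2.2 = t.2.2) := by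
      rw [Finset.mem_filter]; exact ⟨ht, hc, rfl⟩
    have h2' : g t.2.2 ∈ T.filter (fun u => u.2.1 = maxPart a ∧ u.2.2 = t.2.2) := by
      rw [Finset.mem_filter]; exact ⟨hT1, hc1, hl1⟩
    rw [hu, Finset.mem_singleton] at h1' h2'
    exact h1'.trans h2'.symm
  have hrk_le_row : ∀ t ∈ T, rkF a t.2.2 ≤ t.1 := by
    intro t ht
    have hb := h3 t ht
    have hs := hstruct t ht
    have hjv : 1 ≤ t.2.2 ∧ t.2.2 ≤ a.length ∧ a.getD (t.2.2 - 1) 0 ≠ 0 :=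
      ⟨hb.2.2.1, hb.2.2.2, hs.1⟩
    obtain ⟨hT1, hc1, hl1⟩ := hg t.2.2 hjv
    have hgeq : rkF a t.2.2 ≤ (g t.2.2).1 := hlow _ hjv
    rcases lt_or_eq_of_le hs.2.2 with hlt | heq
    · have := h4 t ht (g t.2.2) hT1 hl1.symm (by rw [hc1]; exact hlt)
      omega
    · have heq2 := hcolm_uniq t ht heq
      calc rkF a t.2.2 ≤ (g t.2.2).1 := hgeq
        _ = t.1 := (congrArg Prod.fst heq2).symm
  have hfiber : ∀ i, 1 ≤ i → i ≤ a.length →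
      (T.filter (fun u => u.2.2 = i)).card = a.getD (i-1) 0 := by
    intro i hi1 hi2
    have hmaps : ∀ u ∈ T.filter (fun u => u.2.2 = i), u.2.1 ∈ Finset.Icc 1 (maxPart a) := by
      intro u hu
      rw [Finset.mem_filter] at hu
      have hs := hstruct u hu.1
      simp only [Finset.mem_Icc]
      omega
    rw [Finset.card_eq_sum_card_fiberwise hmaps]
    have hterm : ∀ c ∈ Finset.Icc 1 (maxPart a),
        ((T.filter (fun u => u.2.2 = i)).filter (fun u => u.2.1 = c)).card
          = if maxPart a - a.getD (i-1) 0 < c ∧ c ≤ maxPart a then 1 else 0 := by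
      intro c hc
      rw [Finset.filter_filter, ← h2 i (Finset.mem_Icc.mpr ⟨hi1, hi2⟩) c]
      congr 1
      apply Finset.filter_congr
      intro u _
      tauto
    rw [Finset.sum_congr rfl hterm, ← Finset.card_filter]
    have hv : a.getD (i-1) 0 ≤ maxPart a := getD_le_maxPart a (i-1)
    have heq : (Finset.Icc 1 (maxPart a)).filter
        (fun c => maxPart a - a.getD (i-1) 0 < c ∧ c ≤ maxPart a)
          = Finset.Ioc (maxPart a - a.getD (i-1) 0) (maxPart a) := by
      ext c
      simp only [Finset.mem_filter, Finset.mem_Icc, Finset.mem_Ioc]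
      omega
    rw [heq, Nat.card_Ioc]
    omega
  have hrow_eq : ∀ t ∈ T, t.1 = rkF a t.2.2 := by
    intro t ht
    refine le_antisymm ?_ (hrk_le_row t ht)
    have hAB : T.filter (fun u => u.1 ≤ rkF a t.2.2) =
        T.filter (fun u => rkF a u.2.2 ≤ rkF a t.2.2) := by
      apply Finset.eq_of_subset_of_card_le
      · intro u hu
        rw [Finset.mem_filter] at hu ⊢
        exact ⟨hu.1, le_trans (hrk_le_row u hu.1) hu.2⟩
      · -- card B ≤ card A : both equal the same sum
        have hA : ∀ s : ℕ, (T.filter (fun u => u.1 ≤ s)).card =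
            ∑ r ∈ Finset.Icc 1 s, (compFinsupp (flatC a)) r := by
          intro s
          have hmaps : ∀ u ∈ T.filter (fun u => u.1 ≤ s), u.1 ∈ Finset.Icc 1 s := by
            intro u hu
            rw [Finset.mem_filter] at hu
            exact Finset.mem_Icc.mpr ⟨(h3 u hu.1).1, hu.2⟩
          rw [Finset.card_eq_sum_card_fiberwise hmaps]
          apply Finset.sum_congr rfl
          intro r hr
          simp only [Finset.mem_Icc] at hr
          rw [← hw, wtT_apply]
          congr 1
          rw [Finset.filter_filter]
          apply Finset.filter_congr
          intro u _
          exact ⟨fun h => h.2, fun h => ⟨le_of_eq_of_le h hr.2, h⟩⟩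
        have hA2 : ∀ s : ℕ, ∑ r ∈ Finset.Icc 1 s, (compFinsupp (flatC a)) r =
            ∑ i ∈ Finset.Icc 1 a.length,
              (if rkF a i ∈ Finset.Icc 1 s then a.getD (i-1) 0 else 0) := by
          intro s
          rw [master]
          have : ∀ r ∈ Finset.Icc 1 s,
              (∑ i ∈ Finset.Icc 1 a.length, Finsupp.single (rkF a i) (a.getD (i-1) 0)) r
                = ∑ i ∈ Finset.Icc 1 a.length,
                    (if rkF a i = r then a.getD (i-1) 0 else 0) := by
            intro r _
            rw [Finset.sum_apply']
            apply Finset.sum_congr rfl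
            intro i _
            rw [Finsupp.single_apply]
          rw [Finset.sum_congr rfl this, Finset.sum_comm]
          apply Finset.sum_congr rfl
          intro i _
          rw [Finset.sum_ite_eq (Finset.Icc 1 s) (rkF a i)
            (fun _ => a.getD (i-1) 0)]
        have hB : (T.filter (fun u => rkF a u.2.2 ≤ rkF a t.2.2)).card =
            ∑ i ∈ (Finset.Icc 1 a.length).filter (fun i => rkF a i ≤ rkF a t.2.2),
              a.getD (i-1) 0 := by
          have hmaps : ∀ u ∈ T.filter (fun u => rkF a u.2.2 ≤ rkF a t.2.2),
              u.2.2 ∈ (Finset.Icc 1 a.length).filter (fun i => rkF a i ≤ rkF a t.2.2) := by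
            intro u hu
            rw [Finset.mem_filter] at hu
            have hb := h3 u hu.1
            rw [Finset.mem_filter, Finset.mem_Icc]
            exact ⟨⟨hb.2.2.1, hb.2.2.2⟩, hu.2⟩
          rw [Finset.card_eq_sum_card_fiberwise hmaps]
          apply Finset.sum_congr rfl
          intro i hi
          rw [Finset.mem_filter, Finset.mem_Icc] at hi
          rw [Finset.filter_filter, ← hfiber i hi.1.1 hi.1.2]
          congr 1
          apply Finset.filter_congr
          intro u _
          exact ⟨fun h => h.2, fun h => ⟨le_of_eq_of_le (by rw [h]) hi.2, h⟩⟩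
        rw [hB, hA, hA2, Finset.sum_filter]
        apply le_of_eq
        apply Finset.sum_congr rfl
        intro i hi
        rw [Finset.mem_Icc] at hi
        by_cases hz : a.getD (i-1) 0 = 0
        · rw [hz]; simp
        · have hp := rkF_pos a hi.1 hz
          simp only [Finset.mem_Icc]
          exact if_congr (by omega) rfl rfl
    have hmem : t ∈ T.filter (fun u => rkF a u.2.2 ≤ rkF a t.2.2) := by
      rw [Finset.mem_filter]; exact ⟨ht, le_refl _⟩
    rw [← hAB, Finset.mem_filter] at hmem
    exact hmem.2
  -- conclude
  ext t
  rw [T0_mem]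
  constructor
  · intro ht
    have hb := h3 t ht
    have hs := hstruct t ht
    exact ⟨hb.2.2.1, hb.2.2.2, hs.2.2, hs.2.1, hrow_eq t ht⟩
  · rintro ⟨ht1, ht2, ht3, ht4, ht5⟩
    have hcard := h2 t.2.2 (Finset.mem_Icc.mpr ⟨ht1, ht2⟩) t.2.1
    rw [if_pos ⟨ht4, ht3⟩, Finset.card_eq_one] at hcard
    obtain ⟨u, hu⟩ := hcard
    have hum : u ∈ T.filter (fun v => v.2.1 = t.2.1 ∧ v.2.2 = t.2.2) :=
      hu ▸ Finset.mem_singleton_self u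
    rw [Finset.mem_filter] at hum
    have hut : u = t := by
      have hr := hrow_eq u hum.1
      refine Prod.ext ?_ (Prod.ext hum.2.1 hum.2.2)
      rw [hr, hum.2.2, ht5]
    rw [← hut]
    exact hum.1



/-- There is a unique lock Kohnert tableau `T_a` of content `a` whose weight is
`flat(a)`, the nonzero parts of `a` placed in the bottom rows. -/
theorem lkt_flat_weight_unique (a : List ℕ) :
    ∃! T : Finset (ℕ × ℕ × ℕ), IsLKTF a T ∧ wtT T = compFinsupp (flatC a) := by
  refine ⟨T0 a, ⟨T0_isLKTF a, T0_wt a⟩, ?_⟩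
  intro T hT
  exact lkt_unique a T hT.1 hT.2
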